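/- Let (X, τ) be a compact Hausdorff topological space and let R be a ternary relation on X (write ⟨u,w,v⟩ for (u,w,v) ∈ R and [u,v] = {x : ⟨u,x,v⟩} ∪ {u,v}) which is weakly τ-stable: for every infinite subset K ⊆ X there exist distinct points u, v ∈ K, a point w ∈ [u,v] \ {u,v}, and open neighborhoods U of u and V of v such that w ∈ [x,y] for every x ∈ U ∩ K and y ∈ V ∩ K. Then every R-monotone function f : X → ℝ (i.e. ⟨u,w,v⟩ implies min(f(u), f(v)) ≤ f(w) ≤ max(f(u), f(v))) is fragmented: for every nonempty closed subset Y ⊆ X the restriction f|_Y has at least one point of continuity. -/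

import Mathlib

private lemma stmt6_list {X : Type*} [TopologicalSpace X] (S : Set X) (g : X → ℝ)
    (L : List (ℝ × ℝ))
    (hshrink : ∀ pq ∈ L, ∀ O : Set X, IsOpen O → (O ∩ S).Nonempty →
      ∃ O' : Set X, IsOpen O' ∧ O' ⊆ O ∧ (O' ∩ S).Nonempty ∧
        ((∀ z ∈ O' ∩ S, pq.1 < g z) ∨ (∀ z ∈ O' ∩ S, g z < pq.2))) :
    ∀ O : Set X, IsOpen O → (O ∩ S).Nonempty →
      ∃ O' : Set X, IsOpen O' ∧ O' ⊆ O ∧ (O' ∩ S).Nonempty ∧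
        ∀ pq ∈ L, ((∀ z ∈ O' ∩ S, pq.1 < g z) ∨ (∀ z ∈ O' ∩ S, g z < pq.2)) := by
  induction L with
  | nil =>
    intro O hO hOS
    exact ⟨O, hO, Set.Subset.rfl, hOS, by simp⟩
  | cons pq tl ih =>
    intro O hO hOS
    obtain ⟨O₁, hO₁, hsub₁, hne₁, hside₁⟩ := hshrink pq (by simp) O hO hOS
    obtain ⟨O', hO', hsub', hne', hside'⟩ :=
      ih (fun r hr => hshrink r (by simp [hr])) O₁ hO₁ hne₁
    refine ⟨O', hO', hsub'.trans hsub₁, hne', ?_⟩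
    intro r hr
    rcases List.mem_cons.mp hr with h | h
    · subst h
      rcases hside₁ with hs | hs
      · exact Or.inl fun z hz => hs z ⟨hsub' hz.1, hz.2⟩
      · exact Or.inr fun z hz => hs z ⟨hsub' hz.1, hz.2⟩
    · exact hside' r h

/-- Let `(X, τ)` be compact Hausdorff and `R` a ternary relation on `X`
(with `[u,v] = {x | R u x v} ∪ {u,v}`) which is weakly `τ`-stable.  Then every `R`-monotone
function `f : X → ℝ` is fragmented: its restriction to every nonempty closed subset has a
point of continuity. -/
theorem stmt_6 {X : Type*} [TopologicalSpace X] [CompactSpace X] [T2Space X]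
    (R : X → X → X → Prop)
    (hstable : ∀ K : Set X, K.Infinite → ∃ u ∈ K, ∃ v ∈ K, u ≠ v ∧
      ∃ w : X, R u w v ∧ w ≠ u ∧ w ≠ v ∧
        ∃ U V : Set X, IsOpen U ∧ u ∈ U ∧ IsOpen V ∧ v ∈ V ∧
          ∀ x ∈ U ∩ K, ∀ y ∈ V ∩ K, (R x w y ∨ w = x ∨ w = y))
    (f : X → ℝ)
    (hmono : ∀ u w v : X, R u w v → min (f u) (f v) ≤ f w ∧ f w ≤ max (f u) (f v)) :
    ∀ Y : Set X, Y.Nonempty → IsClosed Y → ∃ y ∈ Y, ContinuousWithinAt f Y y := by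
  intro Y hYne hYcl
  by_contra hcon
  push_neg at hcon
  set g : X → ℝ := fun x => Real.arctan (f x) with hgdef
  -- g is discontinuous everywhere on Y
  have hg : ∀ y ∈ Y, ¬ContinuousWithinAt g Y y := by
    intro y hy hc
    apply hcon y hy
    have hct : ContinuousAt Real.tan (g y) :=
      Real.continuousAt_tan.mpr (Real.cos_arctan_pos (f y)).ne'
    have h1 : ContinuousWithinAt (Real.tan ∘ g) Y y := hct.comp_continuousWithinAt hc
    have h2 : Real.tan ∘ g = f := by
      funext x
      simp [hgdef, Real.tan_arctan]
    rwa [h2] at h1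
  -- g is R-monotone
  have hgmono : ∀ u w v : X, R u w v → min (g u) (g v) ≤ g w ∧ g w ≤ max (g u) (g v) := by
    intro u w v hR
    obtain ⟨h1, h2⟩ := hmono u w v hR
    have hm : Monotone Real.arctan := Real.arctan_strictMono.monotone
    constructor
    · calc min (g u) (g v) = Real.arctan (min (f u) (f v)) := (hm.map_min).symm
        _ ≤ Real.arctan (f w) := hm h1
    · calc g w ≤ Real.arctan (max (f u) (f v)) := hm h2
        _ = max (g u) (g v) := hm.map_max
  -- g is bounded
  have hgbound : ∀ x : X, -2 < g x ∧ g x < 2 := by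
    intro x
    have h1 := Real.arctan_lt_pi_div_two (f x)
    have h2 := Real.neg_pi_div_two_lt_arctan (f x)
    have hpi := Real.pi_lt_d2
    have hpi0 := Real.pi_pos
    constructor
    · simp only [hgdef]; linarith
    · simp only [hgdef]; linarith
  -- oscillation sets
  have hCclosed : ∀ q : ℝ, IsClosed {y : X | ∀ U : Set X, IsOpen U → y ∈ U →
      ∃ y₁ ∈ U ∩ Y, ∃ y₂ ∈ U ∩ Y, q ≤ g y₁ - g y₂} := by
    intro q
    rw [← isOpen_compl_iff, isOpen_iff_forall_mem_open]
    intro y hy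
    have hy' : ¬ (∀ U : Set X, IsOpen U → y ∈ U →
        ∃ y₁ ∈ U ∩ Y, ∃ y₂ ∈ U ∩ Y, q ≤ g y₁ - g y₂) := hy
    push_neg at hy'
    obtain ⟨U, hU, hyU, hne⟩ := hy'
    refine ⟨U, fun z hz hzC => ?_, hU, hyU⟩
    obtain ⟨y₁, h₁, y₂, h₂, hq⟩ := hzC U hU hz
    exact absurd hq (not_le.mpr (hne y₁ h₁ y₂ h₂))
  -- every point of Y lies in some oscillation set
  have hcover : ∀ y ∈ Y, ∃ n : ℕ, y ∈ {y : X | ∀ U : Set X, IsOpen U → y ∈ U →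
      ∃ y₁ ∈ U ∩ Y, ∃ y₂ ∈ U ∩ Y, (1 : ℝ)/(n+1) ≤ g y₁ - g y₂} := by
    intro y hy
    have hnc : ¬Filter.Tendsto g (nhdsWithin y Y) (nhds (g y)) := hg y hy
    rw [Metric.tendsto_nhds] at hnc
    push_neg at hnc
    obtain ⟨ε, hε, hfreq⟩ := hnc
    obtain ⟨n, hn⟩ := exists_nat_one_div_lt hε
    refine ⟨n, ?_⟩
    intro U hU hyU
    have hmem : U ∩ Y ∈ nhdsWithin y Y :=
      Filter.inter_mem (mem_nhdsWithin_of_mem_nhds (hU.mem_nhds hyU)) self_mem_nhdsWithin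
    obtain ⟨x, hx1, hx2⟩ :=
      (hfreq.and_eventually (Filter.eventually_of_mem hmem fun z hz => hz)).exists
    have hyUY : y ∈ U ∩ Y := ⟨hyU, hy⟩
    rcases le_or_gt (g y) (g x) with hle | hlt
    · refine ⟨x, hx2, y, hyUY, ?_⟩
      have hd : dist (g x) (g y) = g x - g y := by
        rw [Real.dist_eq, abs_of_nonneg (by linarith)]
      rw [hd] at hx1
      linarith
    · refine ⟨y, hyUY, x, hx2, ?_⟩
      have hd : dist (g x) (g y) = g y - g x := by
        rw [Real.dist_eq, abs_of_nonpos (by linarith)]; ring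
      rw [hd] at hx1
      linarith
  -- Baire category
  haveI : CompactSpace ↥Y := isCompact_iff_compactSpace.mp hYcl.isCompact
  haveI : Nonempty ↥Y := hYne.to_subtype
  have hunion : (⋃ n : ℕ, (Subtype.val ⁻¹' {y : X | ∀ U : Set X, IsOpen U → y ∈ U →
      ∃ y₁ ∈ U ∩ Y, ∃ y₂ ∈ U ∩ Y, (1 : ℝ)/(n+1) ≤ g y₁ - g y₂} : Set ↥Y)) = Set.univ := by
    rw [Set.eq_univ_iff_forall]
    intro ty
    obtain ⟨n, hn⟩ := hcover ty.1 ty.2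
    exact Set.mem_iUnion.mpr ⟨n, hn⟩
  obtain ⟨n, ty, hty⟩ := nonempty_interior_of_iUnion_of_closed
    (fun n : ℕ => (hCclosed ((1 : ℝ)/(n+1))).preimage continuous_subtype_val) hunion
  set ε : ℝ := 1/(n+1) with hεdef
  have hε : 0 < ε := by positivity
  have h1 := mem_interior_iff_mem_nhds.mp hty
  rw [mem_nhds_subtype] at h1
  obtain ⟨t, ht, hsub⟩ := h1
  obtain ⟨N, hNsub, hNopen, hyN⟩ := mem_nhds_iff.mp ht
  have hNC : ∀ z ∈ N ∩ Y, ∀ U : Set X, IsOpen U → z ∈ U →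
      ∃ y₁ ∈ U ∩ Y, ∃ y₂ ∈ U ∩ Y, ε ≤ g y₁ - g y₂ := by
    rintro z ⟨hzN, hzY⟩
    have : (⟨z, hzY⟩ : ↥Y) ∈ Subtype.val ⁻¹' t := hNsub hzN
    exact hsub this
  set S : Set X := N ∩ Y with hSdef
  have hSne : S.Nonempty := ⟨ty.1, hyN, ty.2⟩
  -- badness: every open set meeting S contains an ε-gap
  have hbad : ∀ O : Set X, IsOpen O → (O ∩ S).Nonempty →
      ∃ y₁ ∈ O ∩ S, ∃ y₂ ∈ O ∩ S, ε ≤ g y₁ - g y₂ := by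
    rintro O hO ⟨z, hzO, hzS⟩
    obtain ⟨y₁, hy₁, y₂, hy₂, hq⟩ := hNC z hzS (O ∩ N) (hO.inter hNopen) ⟨hzO, hzS.1⟩
    exact ⟨y₁, ⟨hy₁.1.1, hy₁.1.2, hy₁.2⟩, y₂, ⟨hy₂.1.1, hy₂.1.2, hy₂.2⟩, hq⟩
  -- key claim : exists p < q and open W with both value classes dense in W ∩ S
  have hkey : ∃ p q : ℝ, p < q ∧ ∃ W : Set X, IsOpen W ∧ (W ∩ S).Nonempty ∧
      ∀ O : Set X, IsOpen O → (O ∩ W ∩ S).Nonempty →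
        (∃ a ∈ O ∩ W ∩ S, g a ≤ p) ∧ (∃ b ∈ O ∩ W ∩ S, q ≤ g b) := by
    by_contra hck
    push_neg at hck
    set L : List (ℝ × ℝ) := (List.range (Nat.ceil (16/ε) + 1)).map
      (fun k : ℕ => (-2 + (k : ℝ)*ε/4, -2 + (k : ℝ)*ε/4 + ε/2)) with hLdef
    have hLlt : ∀ pq ∈ L, pq.1 < pq.2 := by
      intro pq hpq
      simp only [hLdef, List.mem_map] at hpq
      obtain ⟨k, _, rfl⟩ := hpq
      simp only
      linarith
    have hshrink : ∀ pq ∈ L, ∀ O : Set X, IsOpen O → (O ∩ S).Nonempty →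
        ∃ O' : Set X, IsOpen O' ∧ O' ⊆ O ∧ (O' ∩ S).Nonempty ∧
          ((∀ z ∈ O' ∩ S, pq.1 < g z) ∨ (∀ z ∈ O' ∩ S, g z < pq.2)) := by
      intro pq hpq O hO hOS
      obtain ⟨O₁, hO₁, hne₁, himp⟩ := hck pq.1 pq.2 (hLlt pq hpq) O hO hOS
      refine ⟨O₁ ∩ O, hO₁.inter hO, Set.inter_subset_right, hne₁, ?_⟩
      by_cases hex : ∃ a ∈ O₁ ∩ O ∩ S, g a ≤ pq.1
      · exact Or.inr fun z hz => himp hex z hz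
      · refine Or.inl fun z hz => ?_
        by_contra hle
        exact hex ⟨z, hz, not_lt.mp hle⟩
    obtain ⟨Of, hOf, _, hOfne, hOfside⟩ :=
      stmt6_list S g L hshrink Set.univ isOpen_univ (by simpa using hSne)
    obtain ⟨y₁, hy₁, y₂, hy₂, hgap⟩ := hbad Of hOf hOfne
    obtain ⟨hb₂, hb₂'⟩ := hgbound y₂
    obtain ⟨hb₁', hb₁⟩ := hgbound y₁
    set a := g y₂ with hadef
    set t : ℝ := (a + 2) * 4 / ε with htdef
    have ht0 : 0 ≤ t := by
      have : 0 < a + 2 := by linarith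
      positivity
    have htk := Nat.le_ceil t
    rw [htdef, div_le_iff₀ hε] at htk
    have hk1 : a ≤ -2 + (⌈t⌉₊ : ℝ)*ε/4 := by linarith
    have htk2 := Nat.ceil_lt_add_one ht0
    have htε : t * ε = (a + 2) * 4 := div_mul_cancel₀ _ hε.ne'
    have hkε : (⌈t⌉₊ : ℝ) * ε < (a + 2) * 4 + ε := by
      have := mul_lt_mul_of_pos_right htk2 hε
      rw [add_mul, one_mul, htε] at this
      exact this
    have hk2 : -2 + (⌈t⌉₊ : ℝ)*ε/4 + ε/2 ≤ g y₁ := by linarith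
    have hkN : ⌈t⌉₊ < Nat.ceil (16/ε) + 1 := by
      have hle : t ≤ 16/ε := by
        rw [htdef]
        gcongr
        linarith
      have := Nat.ceil_le_ceil hle
      omega
    have hmemL : (-2 + (⌈t⌉₊ : ℝ)*ε/4, -2 + (⌈t⌉₊ : ℝ)*ε/4 + ε/2) ∈ L := by
      rw [hLdef]
      exact List.mem_map_of_mem (f := fun k : ℕ => (-2 + (k : ℝ)*ε/4, -2 + (k : ℝ)*ε/4 + ε/2)) (List.mem_range.mpr hkN)
    rcases hOfside _ hmemL with hs | hs
    · exact absurd (hs y₂ hy₂) (not_lt.mpr hk1)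
    · exact absurd (hs y₁ hy₁) (not_lt.mpr hk2)
  obtain ⟨p, q, hpq, W, hWo, hWne, hWprop⟩ := hkey
  -- dense low-value points avoiding a given point
  have hA : ∀ O : Set X, IsOpen O → (O ∩ W ∩ S).Nonempty → ∀ w : X,
      ∃ a ∈ O ∩ W ∩ S, g a ≤ p ∧ a ≠ w := by
    intro O hO hne w
    obtain ⟨⟨a, ha, hap⟩, ⟨b, hb, hbq⟩⟩ := hWprop O hO hne
    by_cases haw : a = w
    · have hbw : b ≠ w := by
        intro hbw
        have : a = b := haw.trans hbw.symm
        rw [this] at hap; linarith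
      have hne' : ((O ∩ {w}ᶜ) ∩ W ∩ S).Nonempty :=
        ⟨b, ⟨⟨hb.1.1, hbw⟩, hb.1.2⟩, hb.2⟩
      obtain ⟨⟨a', ha', hap'⟩, _⟩ :=
        hWprop (O ∩ {w}ᶜ) (hO.inter isOpen_compl_singleton) hne'
      exact ⟨a', ⟨⟨ha'.1.1.1, ha'.1.2⟩, ha'.2⟩, hap', ha'.1.1.2⟩
    · exact ⟨a, ha, hap, haw⟩
  have hB : ∀ O : Set X, IsOpen O → (O ∩ W ∩ S).Nonempty → ∀ w : X,
      ∃ b ∈ O ∩ W ∩ S, q ≤ g b ∧ b ≠ w := by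
    intro O hO hne w
    obtain ⟨⟨a, ha, hap⟩, ⟨b, hb, hbq⟩⟩ := hWprop O hO hne
    by_cases hbw : b = w
    · have haw : a ≠ w := by
        intro haw
        have : a = b := haw.trans hbw.symm
        rw [this] at hap; linarith
      have hne' : ((O ∩ {w}ᶜ) ∩ W ∩ S).Nonempty :=
        ⟨a, ⟨⟨ha.1.1, haw⟩, ha.1.2⟩, ha.2⟩
      obtain ⟨_, ⟨b', hb', hbq'⟩⟩ :=
        hWprop (O ∩ {w}ᶜ) (hO.inter isOpen_compl_singleton) hne'
      exact ⟨b', ⟨⟨hb'.1.1.1, hb'.1.2⟩, hb'.2⟩, hbq', hb'.1.1.2⟩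
    · exact ⟨b, hb, hbq, hbw⟩
  -- K = W ∩ S is infinite
  have hKinf : (W ∩ S).Infinite := by
    intro hfin
    have hneu : (Set.univ ∩ W ∩ S).Nonempty := by
      rw [Set.univ_inter]; exact hWne
    obtain ⟨⟨a, ha, hap⟩, _⟩ := hWprop Set.univ isOpen_univ hneu
    have haK : a ∈ W ∩ S := ⟨ha.1.2, ha.2⟩
    have hFc : IsClosed ((W ∩ S) \ {a}) := (hfin.subset Set.diff_subset).isClosed
    have hne' : (((W ∩ S) \ {a})ᶜ ∩ W ∩ S).Nonempty :=
      ⟨a, ⟨fun hF => hF.2 rfl, haK.1⟩, haK.2⟩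
    obtain ⟨_, ⟨b, hb, hbq⟩⟩ := hWprop _ hFc.isOpen_compl hne'
    have hbK : b ∈ W ∩ S := ⟨hb.1.2, hb.2⟩
    have hba : b = a := by
      by_contra hba
      exact hb.1.1 ⟨hbK, by simpa using hba⟩
    rw [hba] at hbq
    linarith
  -- apply weak stability
  obtain ⟨u, hu, v, hv, huv, w, hR, hwu, hwv, U, V, hUo, huU, hVo, hvV, hUV⟩ :=
    hstable (W ∩ S) hKinf
  have hUne : (U ∩ W ∩ S).Nonempty := ⟨u, ⟨huU, hu.1⟩, hu.2⟩
  have hVne : (V ∩ W ∩ S).Nonempty := ⟨v, ⟨hvV, hv.1⟩, hv.2⟩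
  obtain ⟨x₁, hx₁, hx₁p, hx₁w⟩ := hA U hUo hUne w
  obtain ⟨y₁, hy₁, hy₁p, hy₁w⟩ := hA V hVo hVne w
  obtain ⟨x₂, hx₂, hx₂q, hx₂w⟩ := hB U hUo hUne w
  obtain ⟨y₂, hy₂, hy₂q, hy₂w⟩ := hB V hVo hVne w
  have hR1 : R x₁ w y₁ := by
    rcases hUV x₁ ⟨hx₁.1.1, hx₁.1.2, hx₁.2⟩ y₁ ⟨hy₁.1.1, hy₁.1.2, hy₁.2⟩ with h | h | h
    · exact h
    · exact absurd h.symm hx₁w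
    · exact absurd h.symm hy₁w
  have hR2 : R x₂ w y₂ := by
    rcases hUV x₂ ⟨hx₂.1.1, hx₂.1.2, hx₂.2⟩ y₂ ⟨hy₂.1.1, hy₂.1.2, hy₂.2⟩ with h | h | h
    · exact h
    · exact absurd h.symm hx₂w
    · exact absurd h.symm hy₂w
  have h1 : g w ≤ p := (hgmono _ _ _ hR1).2.trans (max_le hx₁p hy₁p)
  have h2 : q ≤ g w := (le_min hx₂q hy₂q).trans (hgmono _ _ _ hR2).1
  linarith
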